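/- Let H = (V, E) be a connected 3-uniform hypergraph with m edges that contains no cycle (i.e., H is a hypertree). Then τ(H) ≤ (2m + 1)/3. -/

import Mathlib

variable {V : Type*} [Fintype V] [DecidableEq V] [Nonempty V]

/-- Two vertices are adjacent if some edge contains both. -/
def Adj (E : Finset (Finset V)) (u w : V) : Prop := ∃ e ∈ E, u ∈ e ∧ w ∈ e

/-- A hypergraph is connected if any two vertices are joined by a path
(equivalently, by a walk, i.e. a chain of adjacencies). -/
def HConnected (E : Finset (Finset V)) : Prop :=
  ∀ u w : V, Relation.ReflTransGen (Adj E) u w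

/-- A hypergraph is 3-uniform if every edge has exactly 3 vertices. -/
def Uniform3 (E : Finset (Finset V)) : Prop := ∀ e ∈ E, e.card = 3

/-- A cycle `v₁e₁v₂e₂…vₖeₖv₁` (k ≥ 2) in the hypergraph with edge set `E`:
distinct vertices, distinct edges, and `{vᵢ, vᵢ₊₁} ⊆ eᵢ` with indices mod k. -/
structure HCycle (E : Finset (Finset V)) where
  k : ℕ
  two_le : 2 ≤ k
  v : ZMod k → V
  e : ZMod k → Finset V
  v_inj : Function.Injective v
  e_inj : Function.Injective e
  e_mem : ∀ i, e i ∈ E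
  mem_left : ∀ i, v i ∈ e i
  mem_right : ∀ i, v (i + 1) ∈ e i

def HasCycle (E : Finset (Finset V)) : Prop := Nonempty (HCycle E)

/-- A hypertree is a connected acyclic hypergraph. -/
def IsHypertree (E : Finset (Finset V)) : Prop := HConnected E ∧ ¬ HasCycle E

/-- A vertex cover is a set of vertices meeting every edge. -/
def IsVertexCover (E : Finset (Finset V)) (S : Finset V) : Prop :=
  ∀ e ∈ E, ∃ x ∈ S, x ∈ e

/-- The vertex cover number τ: minimum cardinality of a vertex cover. -/
noncomputable def coverNum (E : Finset (Finset V)) : ℕ :=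
  sInf {n | ∃ S : Finset V, IsVertexCover E S ∧ S.card = n}

/-- A matching is a set of pairwise disjoint edges. -/
def IsMatching (E : Finset (Finset V)) (M : Finset (Finset V)) : Prop :=
  M ⊆ E ∧ ∀ e ∈ M, ∀ f ∈ M, e ≠ f → Disjoint e f

/-- The matching number ν: maximum cardinality of a matching. -/
noncomputable def matchNum (E : Finset (Finset V)) : ℕ :=
  sSup {n | ∃ M : Finset (Finset V), IsMatching E M ∧ M.card = n}

/-- A perfect matching is a matching covering every vertex. -/
def HasPerfectMatching (E : Finset (Finset V)) : Prop :=
  ∃ M : Finset (Finset V), IsMatching E M ∧ ∀ x : V, ∃ e ∈ M, x ∈ e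

/-- The degree of a vertex: the number of edges containing it. -/
def hdegree (E : Finset (Finset V)) (x : V) : ℕ := (E.filter fun e => x ∈ e).card

/-- The number of connected components of the hypergraph with vertex set `S`
and edge set `E`: the number of equivalence classes of vertices of `S` under
the equivalence generated by adjacency. -/
noncomputable def numComponents (S : Finset V) (E : Finset (Finset V)) : ℕ :=
  Nat.card (Quotient (Setoid.comap (Subtype.val : {x // x ∈ S} → V)
    (Relation.EqvGen.setoid (Adj E))))

/-- `C` is a connected component of the hypergraph with vertex set `S` and edge
set `E` : a nonempty subset of `S`, closed under reachability, any two of whose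
vertices are joined by a path. -/
def IsComponent (S : Finset V) (E : Finset (Finset V)) (C : Finset V) : Prop :=
  C ⊆ S ∧ C.Nonempty ∧
  (∀ x ∈ C, ∀ y ∈ S, Relation.ReflTransGen (Adj E) x y → y ∈ C) ∧
  (∀ x ∈ C, ∀ y ∈ C, Relation.ReflTransGen (Adj E) x y)

/-- A cycle is minimal if any two non-adjacent edges of it are disjoint. -/
def IsMinimalCycle {E : Finset (Finset V)} (C : HCycle E) : Prop :=
  ∀ i j : ZMod C.k, j ≠ i → j ≠ i + 1 → i ≠ j + 1 → Disjoint (C.e i) (C.e j)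

/-- Two cycles share a common vertex. -/
def ShareVertex {E : Finset (Finset V)} (C₁ C₂ : HCycle E) : Prop :=
  ∃ x : V, (∃ i, x ∈ C₁.e i) ∧ (∃ j, x ∈ C₂.e j)

set_option linter.unusedSectionVars false

def PathN (A : Finset (Finset V)) (u v : V) (n : ℕ) : Prop :=
  ∃ vs : ℕ → V, ∃ es : ℕ → Finset V, vs 0 = u ∧ vs n = v ∧
    ∀ i < n, es i ∈ A ∧ vs i ∈ es i ∧ vs (i+1) ∈ es i

lemma pathN_of_rtg {A : Finset (Finset V)} {u v : V}
    (h : Relation.ReflTransGen (Adj A) u v) : ∃ n, PathN A u v n := by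
  induction h with
  | refl =>
      exact ⟨0, fun _ => u, fun _ => ∅, rfl, rfl, fun i hi => absurd hi (Nat.not_lt_zero i)⟩
  | @tail b c hab hbc ih =>
      obtain ⟨n, vs, es, h0, hn, hstep⟩ := ih
      obtain ⟨g, hg, hb, hc⟩ := hbc
      refine ⟨n+1, fun i => if i ≤ n then vs i else c, fun i => if i < n then es i else g,
        ?_, ?_, ?_⟩
      · simpa using h0
      · simp
      · intro i hi
        rcases Nat.lt_or_ge i n with h1 | h1
        · have h2 : i ≤ n := h1.le
          have h3 : i + 1 ≤ n := h1
          obtain ⟨ha, hb', hc'⟩ := hstep i h1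
          simp only [if_pos h1, if_pos h2, if_pos h3]
          exact ⟨ha, hb', hc'⟩
        · have h2 : i = n := by omega
          subst h2
          simp only [if_neg (lt_irrefl i), if_pos le_rfl, if_neg (by omega : ¬ i + 1 ≤ i)]
          exact ⟨hg, hn ▸ hb, hc⟩

lemma cyc_of_path {E A : Finset (Finset V)} (hA : A ⊆ E) {f : Finset V} (hf : f ∈ E)
    (hfA : f ∉ A) {u v : V} (huv : u ≠ v) (hu : u ∈ f) (hv : v ∈ f)
    (h : Relation.ReflTransGen (Adj A) u v) : HasCycle E := by
  classical
  have hne : {n | PathN A u v n}.Nonempty := pathN_of_rtg h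
  set n₀ := sInf {n | PathN A u v n} with hn₀def
  have hmem : PathN A u v n₀ := Nat.sInf_mem hne
  have hmin : ∀ L < n₀, ¬ PathN A u v L := fun L hL => Nat.notMem_of_lt_sInf hL
  obtain ⟨vs, es, h0, hn, hstep⟩ := hmem
  have hpos : 1 ≤ n₀ := by
    rcases Nat.eq_zero_or_pos n₀ with h1 | h1
    · exact absurd (h0 ▸ h1 ▸ hn) huv
    · exact h1
  have splice : ∀ i j, i < j → j ≤ n₀ → (vs i = vs j ∨ (j < n₀ ∧ es i = es j)) → False := by
    intro i j hij hjn hcase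
    set Δ := j - i with hΔ
    have hΔ1 : 1 ≤ Δ := by omega
    set L := n₀ - Δ with hL
    have hLn : L < n₀ := by omega
    apply hmin L hLn
    refine ⟨fun t => if t ≤ i then vs t else vs (t + Δ),
      fun t => if t < i then es t else es (t + Δ), by simpa using h0, ?_, ?_⟩
    · rcases Nat.lt_or_ge i L with h1 | h1
      · have : ¬ L ≤ i := by omega
        simp only [if_neg this]
        have : L + Δ = n₀ := by omega
        rw [this, hn]
      · have h2 : L = i := by omega
        have h3 : j = n₀ := by omega
        simp only [h2, if_pos le_rfl]
        rcases hcase with h4 | h4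
        · rw [h4, h3, hn]
        · omega
    · intro t ht
      rcases Nat.lt_trichotomy t i with h1 | h1 | h1
      · obtain ⟨ha, hb', hc'⟩ := hstep t (by omega)
        simp only [if_pos h1, if_pos h1.le, if_pos (by omega : t + 1 ≤ i)]
        exact ⟨ha, hb', hc'⟩
      · subst h1
        have hjlt : j < n₀ := by omega
        obtain ⟨ha, hb', hc'⟩ := hstep j hjlt
        have e1 : t + Δ = j := by omega
        simp only [if_neg (lt_irrefl t), if_pos le_rfl, if_neg (by omega : ¬ t + 1 ≤ t), e1]
        refine ⟨ha, ?_, ?_⟩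
        · rcases hcase with h4 | h4
          · rw [h4]; exact hb'
          · rw [← h4.2]; exact (hstep t (by omega)).2.1
        · have e2 : t + 1 + Δ = j + 1 := by omega
          rw [e2]; exact hc'
      · obtain ⟨ha, hb', hc'⟩ := hstep (t + Δ) (by omega)
        simp only [if_neg (by omega : ¬ t < i), if_neg (by omega : ¬ t ≤ i),
          if_neg (by omega : ¬ t + 1 ≤ i)]
        have : t + 1 + Δ = t + Δ + 1 := by omega
        rw [this]
        exact ⟨ha, hb', hc'⟩
  have vinj : ∀ i j, i ≤ n₀ → j ≤ n₀ → vs i = vs j → i = j := by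
    intro i j hi hj hv'
    rcases Nat.lt_trichotomy i j with h1 | h1 | h1
    · exact absurd (splice i j h1 hj (Or.inl hv')) not_false
    · exact h1
    · exact absurd (splice j i h1 hi (Or.inl hv'.symm)) not_false
  have einj : ∀ i j, i < n₀ → j < n₀ → es i = es j → i = j := by
    intro i j hi hj he'
    rcases Nat.lt_trichotomy i j with h1 | h1 | h1
    · exact absurd (splice i j h1 hj.le (Or.inr ⟨hj, he'⟩)) not_false
    · exact h1
    · exact absurd (splice j i h1 hi.le (Or.inr ⟨hi, he'.symm⟩)) not_false
  haveI : NeZero (n₀ + 1) := ⟨n₀.succ_ne_zero⟩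
  have hval : ∀ i : ZMod (n₀ + 1), i.val < n₀ + 1 := fun i => ZMod.val_lt i
  have hvone : (1 : ZMod (n₀ + 1)).val = 1 := by
    rw [ZMod.val_one_eq_one_mod]
    exact Nat.mod_eq_of_lt (by omega)
  have haddval : ∀ i : ZMod (n₀ + 1), (i + 1).val = (i.val + 1) % (n₀ + 1) := by
    intro i; rw [ZMod.val_add, hvone]
  refine ⟨⟨n₀ + 1, by omega, fun i => vs i.val,
    fun i => if i.val = n₀ then f else es i.val, ?_, ?_, ?_, ?_, ?_⟩⟩
  · intro i j hij
    exact ZMod.val_injective _ (vinj _ _ (by have := hval i; omega) (by have := hval j; omega) hij)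
  · intro i j hij
    simp only at hij
    by_cases h1 : i.val = n₀ <;> by_cases h2 : j.val = n₀
    · exact ZMod.val_injective _ (h1.trans h2.symm)
    · rw [if_pos h1, if_neg h2] at hij
      exact absurd (hij ▸ (hstep j.val (by have := hval j; omega)).1) hfA
    · rw [if_neg h1, if_pos h2] at hij
      exact absurd (hij ▸ (hstep i.val (by have := hval i; omega)).1) hfA
    · rw [if_neg h1, if_neg h2] at hij
      exact ZMod.val_injective _
        (einj _ _ (by have := hval i; omega) (by have := hval j; omega) hij)
  · intro i
    by_cases h1 : i.val = n₀
    · simpa [h1] using hf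
    · simp only [if_neg h1]
      exact hA (hstep i.val (by have := hval i; omega)).1
  · intro i
    by_cases h1 : i.val = n₀
    · simp only [if_pos h1, h1, hn]
      exact hv
    · simp only [if_neg h1]
      exact (hstep i.val (by have := hval i; omega)).2.1
  · intro i
    by_cases h1 : i.val = n₀
    · have : (i + 1).val = 0 := by rw [haddval, h1, Nat.mod_self]
      simp only [if_pos h1, this, h0]
      exact hu
    · have hlt : i.val < n₀ := by have := hval i; omega
      have : (i + 1).val = i.val + 1 := by rw [haddval]; exact Nat.mod_eq_of_lt (by omega)
      simp only [if_neg h1, this]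
      exact (hstep i.val hlt).2.2


lemma adj_symm {A : Finset (Finset V)} {u v : V} (h : Adj A u v) : Adj A v u :=
  let ⟨e, he, hu, hv⟩ := h; ⟨e, he, hv, hu⟩

lemma rtg_symm {A : Finset (Finset V)} {u v : V} (h : Relation.ReflTransGen (Adj A) u v) :
    Relation.ReflTransGen (Adj A) v u :=
  by haveI : Std.Symm (Adj A) := ⟨fun _ _ => adj_symm⟩; exact Std.Symm.symm _ _ h

lemma rtg_mono {A B : Finset (Finset V)} (hAB : A ⊆ B) {u v : V}
    (h : Relation.ReflTransGen (Adj A) u v) : Relation.ReflTransGen (Adj B) u v :=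
  Relation.ReflTransGen.mono (r := Adj A) (p := Adj B) (fun _ _ ⟨e, he, h1, h2⟩ => ⟨e, hAB he, h1, h2⟩) _ _ h

lemma rtg_of_edge {A : Finset (Finset V)} {g : Finset V} (hg : g ∈ A) {u v : V}
    (hu : u ∈ g) (hv : v ∈ g) : Relation.ReflTransGen (Adj A) u v :=
  Relation.ReflTransGen.single ⟨g, hg, hu, hv⟩

lemma edges_eq_of_two {E : Finset (Finset V)} (hac : ¬ HasCycle E) {f g : Finset V}
    (hf : f ∈ E) (hg : g ∈ E) {u v : V} (hu : u ∈ f) (hu' : u ∈ g) (hv : v ∈ f)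
    (hv' : v ∈ g) (huv : u ≠ v) : f = g := by
  by_contra hne
  exact hac (cyc_of_path (A := {g}) (Finset.singleton_subset_iff.2 hg) hf
    (by simp [hne]) huv hu hv (rtg_of_edge (Finset.mem_singleton_self g) hu' hv'))

lemma trunc {E B : Finset (Finset V)} {u t : V}
    (h : Relation.ReflTransGen (Adj E) u t) (ht : t ∈ B.biUnion id) :
    ∃ p ∈ B.biUnion id, Relation.ReflTransGen (Adj (E \ B)) u p ∧
      (p = u ∨ ∃ g ∈ E \ B, p ∈ g) := by
  induction h using Relation.ReflTransGen.head_induction_on with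
  | refl => exact ⟨t, ht, Relation.ReflTransGen.refl, Or.inl rfl⟩
  | head h' h ih =>
      rename_i a c
      by_cases haB : a ∈ B.biUnion id
      · exact ⟨a, haB, Relation.ReflTransGen.refl, Or.inl rfl⟩
      · obtain ⟨g, hg, hag, hcg⟩ := h'
        have hgB : g ∉ B := fun hgB => haB (Finset.mem_biUnion.2 ⟨g, hgB, hag⟩)
        have hgE : g ∈ E \ B := Finset.mem_sdiff.2 ⟨hg, hgB⟩
        obtain ⟨p, hp, hreach, hor⟩ := ih
        refine ⟨p, hp, Relation.ReflTransGen.head ⟨g, hgE, hag, hcg⟩ hreach, Or.inr ?_⟩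
        rcases hor with rfl | hor
        · exact ⟨g, hgE, hcg⟩
        · exact hor

lemma reach_in_comp {E C : Finset (Finset V)} {w u : V}
    (h : Relation.ReflTransGen (Adj E) u w)
    (hC : ∀ g ∈ E, (∃ x ∈ g, Relation.ReflTransGen (Adj E) x w) → g ∈ C) :
    Relation.ReflTransGen (Adj C) u w := by
  induction h using Relation.ReflTransGen.head_induction_on with
  | refl => exact Relation.ReflTransGen.refl
  | head h' h ih =>
      rename_i a c
      obtain ⟨g, hg, hag, hcg⟩ := h'
      exact Relation.ReflTransGen.head ⟨g, hC g hg ⟨c, hcg, h⟩, hag, hcg⟩ ih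

lemma reach_avoid {E C : Finset (Finset V)} {w₀ u w : V}
    (h : Relation.ReflTransGen (Adj E) u w)
    (hC : ∀ g ∈ C, ∀ x ∈ g, Relation.ReflTransGen (Adj E) x w₀) :
    ¬ Relation.ReflTransGen (Adj E) u w₀ →
      Relation.ReflTransGen (Adj (E \ C)) u w := by
  induction h using Relation.ReflTransGen.head_induction_on with
  | refl => exact fun _ => Relation.ReflTransGen.refl
  | head h' h ih =>
      rename_i a c
      intro ha
      obtain ⟨g, hg, hag, hcg⟩ := h'
      have hgC : g ∉ C := fun hgC => ha (hC g hgC a hag)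
      have hc : ¬ Relation.ReflTransGen (Adj E) c w₀ :=
        fun hc => ha (Relation.ReflTransGen.head ⟨g, hg, hag, hcg⟩ hc)
      exact Relation.ReflTransGen.head ⟨g, Finset.mem_sdiff.2 ⟨hg, hgC⟩, hag, hcg⟩ (ih hc)

lemma hasCycle_mono {A E : Finset (Finset V)} (hAE : A ⊆ E) (h : HasCycle A) : HasCycle E :=
  let ⟨C⟩ := h
  ⟨⟨C.k, C.two_le, C.v, C.e, C.v_inj, C.e_inj, fun i => hAE (C.e_mem i),
    C.mem_left, C.mem_right⟩⟩

def ECon (E : Finset (Finset V)) : Prop :=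
  ∀ u ∈ E.biUnion id, ∀ v ∈ E.biUnion id, Relation.ReflTransGen (Adj E) u v

lemma mega (n : ℕ) : ∀ E : Finset (Finset V), E.card = n → ¬ HasCycle E → Uniform3 E →
    ((E.Nonempty → ECon E →
       (2 * E.card + 1 ≤ (E.biUnion id).card ∧
        ∃ S, IsVertexCover E S ∧ 3 * S.card ≤ 2 * E.card + 1)) ∧
     (∀ W : Finset V, (∀ f ∈ E, ∃ w ∈ W, ∃ x ∈ f, Relation.ReflTransGen (Adj E) x w) →
        ∃ S, IsVertexCover E S ∧ 3 * S.card ≤ 2 * E.card + W.card)) := by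
  induction n using Nat.strong_induction_on with
  | _ n IH =>
  intro E hcard hac h3
  classical
  have hedge_ne : ∀ f ∈ E, f.Nonempty := by
    intro f hf
    rw [← Finset.card_pos, h3 f hf]; omega
  -- Part A : vertex count bound and cover bound for connected E
  have partA : E.Nonempty → ECon E →
      (2 * E.card + 1 ≤ (E.biUnion id).card ∧
       ∃ S, IsVertexCover E S ∧ 3 * S.card ≤ 2 * E.card + 1) := by
    intro hne hecon
    have hnpos : 1 ≤ n := by
      rw [← hcard]; exact Finset.card_pos.2 hne
    -- ===== vertex count bound =====
    have hVC : 2 * E.card + 1 ≤ (E.biUnion id).card := by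
      obtain ⟨e, he⟩ := hne
      set E' := E.erase e with hE'def
      have hE'sub : E' ⊆ E := Finset.erase_subset e E
      have hE'sd : E' = E \ {e} := by rw [hE'def, Finset.erase_eq]
      have heE' : e ∉ E' := Finset.notMem_erase e E
      have hE'card : E'.card = n - 1 := by rw [hE'def, Finset.card_erase_of_mem he, hcard]
      set U' := E'.biUnion id with hU'def
      set T := e ∩ U' with hTdef
      set Cu : V → Finset (Finset V) :=
        fun u => E'.filter (fun f => ∃ x ∈ f, Relation.ReflTransGen (Adj E') x u) with hCudef
      have hCusub : ∀ u, Cu u ⊆ E' := fun u => Finset.filter_subset _ _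
      have hCune : ∀ u ∈ T, (Cu u).Nonempty := by
        intro u hu
        rw [hTdef, Finset.mem_inter] at hu
        obtain ⟨f, hf, huf⟩ := Finset.mem_biUnion.1 hu.2
        exact ⟨f, Finset.mem_filter.2 ⟨hf, u, huf, Relation.ReflTransGen.refl⟩⟩
      -- reach u u' across two components gives a cycle
      have hkey : ∀ u ∈ T, ∀ u' ∈ T, u ≠ u' →
          ¬ Relation.ReflTransGen (Adj E') u u' := by
        intro u hu u' hu' huu' hreach
        rw [hTdef, Finset.mem_inter] at hu hu'
        refine hac (cyc_of_path (A := E') hE'sub he ?_ huu' hu.1 hu'.1 hreach)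
        rw [hE'def]; exact Finset.notMem_erase e E
      have hdisj : ∀ u ∈ T, ∀ u' ∈ T, u ≠ u' → Disjoint (Cu u) (Cu u') := by
        intro u hu u' hu' huu'
        rw [Finset.disjoint_left]
        intro f hfu hfu'
        obtain ⟨hfE', x, hxf, hxu⟩ := Finset.mem_filter.1 hfu
        obtain ⟨_, x', hx'f, hx'u'⟩ := Finset.mem_filter.1 hfu'
        exact hkey u hu u' hu' huu'
          ((rtg_symm hxu).trans ((rtg_of_edge hfE' hxf hx'f).trans hx'u'))
      have hvdisj : ∀ u ∈ T, ∀ u' ∈ T, u ≠ u' →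
          Disjoint ((Cu u).biUnion id) ((Cu u').biUnion id) := by
        intro u hu u' hu' huu'
        rw [Finset.disjoint_left]
        intro a ha ha'
        obtain ⟨f, hf, haf⟩ := Finset.mem_biUnion.1 ha
        obtain ⟨f', hf', haf'⟩ := Finset.mem_biUnion.1 ha'
        obtain ⟨hfE', x, hxf, hxu⟩ := Finset.mem_filter.1 hf
        obtain ⟨hf'E', x', hx'f', hx'u'⟩ := Finset.mem_filter.1 hf'
        exact hkey u hu u' hu' huu'
          ((rtg_symm ((rtg_of_edge hfE' haf hxf).trans hxu)).trans
            ((rtg_of_edge hf'E' haf' hx'f').trans hx'u'))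
      have hpart : E' = T.biUnion Cu := by
        apply Finset.Subset.antisymm
        · intro f hf
          obtain ⟨x₀, hx₀⟩ := hedge_ne f (hE'sub hf)
          obtain ⟨w, hw⟩ := hedge_ne e he
          have h1 : Relation.ReflTransGen (Adj E) x₀ w :=
            hecon x₀ (Finset.mem_biUnion.2 ⟨f, hE'sub hf, hx₀⟩)
              w (Finset.mem_biUnion.2 ⟨e, he, hw⟩)
          have hwB : w ∈ ({e} : Finset (Finset V)).biUnion id := by
            rw [Finset.singleton_biUnion]; exact hw
          obtain ⟨p, hp, hpath, hor⟩ := trunc h1 hwB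
          rw [Finset.singleton_biUnion] at hp
          rw [← hE'sd] at hpath
          have hpU' : p ∈ U' := by
            rcases hor with rfl | ⟨g, hg, hpg⟩
            · exact Finset.mem_biUnion.2 ⟨f, hf, hx₀⟩
            · rw [← hE'sd] at hg
              exact Finset.mem_biUnion.2 ⟨g, hg, hpg⟩
          refine Finset.mem_biUnion.2 ⟨p, ?_, Finset.mem_filter.2 ⟨hf, x₀, hx₀, hpath⟩⟩
          rw [hTdef, Finset.mem_inter]; exact ⟨hp, hpU'⟩
        · intro f hf
          obtain ⟨u, _, hfu⟩ := Finset.mem_biUnion.1 hf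
          exact hCusub u hfu
      -- apply IH to each component
      have hcomp : ∀ u ∈ T, 2 * (Cu u).card + 1 ≤ ((Cu u).biUnion id).card := by
        intro u hu
        have hsubE : Cu u ⊆ E := (hCusub u).trans hE'sub
        have hcardlt : (Cu u).card < n := by
          have h1 : (Cu u).card ≤ E'.card := Finset.card_le_card (hCusub u)
          omega
        have hCecon : ECon (Cu u) := by
          have hto_u : ∀ a ∈ (Cu u).biUnion id, Relation.ReflTransGen (Adj (Cu u)) a u := by
            intro a ha
            obtain ⟨f, hf, haf⟩ := Finset.mem_biUnion.1 ha
            obtain ⟨hfE', x, hxf, hxu⟩ := Finset.mem_filter.1 hf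
            have h1 : Relation.ReflTransGen (Adj E') a u :=
              (rtg_of_edge hfE' haf hxf).trans hxu
            exact reach_in_comp h1 (fun g hg hgx => Finset.mem_filter.2 ⟨hg, hgx⟩)
          intro a ha b hb
          exact (hto_u a ha).trans (rtg_symm (hto_u b hb))
        exact ((IH _ hcardlt (Cu u) rfl (fun hc => hac (hasCycle_mono hsubE hc))
          (fun g hg => h3 g (hsubE hg))).1 (hCune u hu) hCecon).1
      -- assemble the counting
      have hTsub : T ⊆ e := Finset.inter_subset_left
      have hcards : E'.card = ∑ u ∈ T, (Cu u).card := by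
        rw [hpart]; exact Finset.card_biUnion hdisj
      have hU'eq : U' = T.biUnion (fun u => (Cu u).biUnion id) := by
        rw [hU'def, hpart, Finset.biUnion_biUnion]
      have hU'card : U'.card = ∑ u ∈ T, ((Cu u).biUnion id).card := by
        rw [hU'eq]; exact Finset.card_biUnion hvdisj
      have hsum : ∑ u ∈ T, (2 * (Cu u).card + 1) ≤ U'.card := by
        rw [hU'card]; exact Finset.sum_le_sum hcomp
      have hsum2 : ∑ u ∈ T, (2 * (Cu u).card + 1) = 2 * E'.card + T.card := by
        rw [Finset.sum_add_distrib, ← Finset.mul_sum, ← hcards]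
        simp
      have hEbu : E.biUnion id = e ∪ U' := by
        conv_lhs => rw [← Finset.insert_erase he]
        rw [Finset.biUnion_insert, ← hE'def, ← hU'def]
        rfl
      have hc1 : (e \ U').card + U'.card = (E.biUnion id).card := by
        rw [hEbu]; exact Finset.card_sdiff_add_card e U'
      have hc2 : (e \ U') = e \ T := by
        rw [hTdef]; ext a; simp only [Finset.mem_sdiff, Finset.mem_inter]; tauto
      have hc2' : (e \ U').card = (e \ T).card := by rw [hc2]
      have hc3 : (e \ T).card + T.card = 3 := by
        rw [Finset.card_sdiff_add_card_eq_card hTsub]; exact h3 e he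
      have hTle : T.card ≤ 3 := by
        have := Finset.card_le_card hTsub
        rw [h3 e he] at this; exact this
      rw [hcard]
      omega
    refine ⟨hVC, ?_⟩
    -- ===== cover bound for connected E =====
    set U := E.biUnion id with hUdef
    set deg : V → ℕ := fun v => (E.filter (fun f => v ∈ f)).card with hdegdef
    have hdeg_sum : ∑ v ∈ U, deg v = 3 * n := by
      have h1 : ∀ v, deg v = ∑ f ∈ E, if v ∈ f then 1 else 0 := by
        intro v; rw [hdegdef]; exact Finset.card_filter _ _
      calc ∑ v ∈ U, deg v = ∑ v ∈ U, ∑ f ∈ E, if v ∈ f then 1 else 0 := by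
            exact Finset.sum_congr rfl (fun v _ => h1 v)
        _ = ∑ f ∈ E, ∑ v ∈ U, if v ∈ f then 1 else 0 := Finset.sum_comm
        _ = ∑ f ∈ E, (U.filter (fun v => v ∈ f)).card :=
            Finset.sum_congr rfl (fun f _ => (Finset.card_filter _ _).symm)
        _ = ∑ f ∈ E, f.card := by
            refine Finset.sum_congr rfl (fun f hf => ?_)
            congr 1
            apply Finset.Subset.antisymm
            · exact fun a ha => (Finset.mem_filter.1 ha).2
            · exact fun a ha => Finset.mem_filter.2
                ⟨Finset.mem_biUnion.2 ⟨f, hf, ha⟩, ha⟩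
        _ = 3 * n := by
            rw [Finset.sum_congr rfl (fun f hf => h3 f hf)]
            simp [hcard, mul_comm]
    have hdeg1 : ∀ v ∈ U, 1 ≤ deg v := by
      intro v hv
      obtain ⟨f, hf, hvf⟩ := Finset.mem_biUnion.1 hv
      rw [hdegdef]
      exact Finset.card_pos.2 ⟨f, Finset.mem_filter.2 ⟨hf, hvf⟩⟩
    set U₁ := U.filter (fun v => deg v ≤ 1) with hU₁def
    have hlow : ∑ v ∈ U, (if deg v ≤ 1 then 1 else 2) ≤ ∑ v ∈ U, deg v := by
      refine Finset.sum_le_sum (fun v hv => ?_)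
      by_cases h : deg v ≤ 1
      · rw [if_pos h]; exact hdeg1 v hv
      · rw [if_neg h]; omega
    have hsplit : ∑ v ∈ U, (if deg v ≤ 1 then 1 else 2)
        = U₁.card + 2 * (U.filter (fun v => ¬ deg v ≤ 1)).card := by
      rw [Finset.sum_ite, Finset.sum_const, Finset.sum_const, ← hU₁def]
      simp [mul_comm]
    have hsplit2 : U₁.card + (U.filter (fun v => ¬ deg v ≤ 1)).card = U.card :=
      Finset.card_filter_add_card_filter_not _
    have hU₁big : n + 2 ≤ U₁.card := by
      rw [hcard] at hVC; omega
    -- find a pendant edge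
    set pick : V → Finset V := fun v =>
      if h : ∃ g ∈ E, v ∈ g then h.choose else ∅ with hpickdef
    have hpick : ∀ v ∈ U, pick v ∈ E ∧ v ∈ pick v := by
      intro v hv
      obtain ⟨f, hf, hvf⟩ := Finset.mem_biUnion.1 hv
      have hex : ∃ g ∈ E, v ∈ g := ⟨f, hf, hvf⟩
      rw [hpickdef]
      simp only [dif_pos hex]
      exact ⟨hex.choose_spec.1, hex.choose_spec.2⟩
    have hmaps : ∀ v ∈ U₁, pick v ∈ E := fun v hv =>
      (hpick v (Finset.mem_filter.1 hv).1).1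
    have hcardlt : E.card < U₁.card := by rw [hcard]; omega
    obtain ⟨y, hy, z, hz, hyz, hpyz⟩ :=
      Finset.exists_ne_map_eq_of_card_lt_of_maps_to hcardlt hmaps
    set e := pick y with hedef
    have he : e ∈ E := hmaps y hy
    have hye : y ∈ e := (hpick y (Finset.mem_filter.1 hy).1).2
    have hze : z ∈ e := by
      have h := (hpick z (Finset.mem_filter.1 hz).1).2
      rwa [← hpyz] at h
    have honly : ∀ v ∈ U₁, ∀ f ∈ E, v ∈ f → ∀ g ∈ E, v ∈ g → f = g := by
      intro v hv f hf hvf g hg hvg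
      have h1 : deg v ≤ 1 := (Finset.mem_filter.1 hv).2
      exact Finset.card_le_one.1 h1 f (Finset.mem_filter.2 ⟨hf, hvf⟩)
        g (Finset.mem_filter.2 ⟨hg, hvg⟩)
    have honly_y : ∀ f ∈ E, y ∈ f → f = e := fun f hf hyf => honly y hy f hf hyf e he hye
    have honly_z : ∀ f ∈ E, z ∈ f → f = e := fun f hf hzf => honly z hz f hf hzf e he hze
    -- third vertex x
    have hx_ex : (e \ ({y, z} : Finset V)).Nonempty := by
      rw [← Finset.card_pos]
      have h1 := Finset.le_card_sdiff ({y, z} : Finset V) e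
      have h2 : ({y, z} : Finset V).card ≤ 2 := Finset.card_le_two
      rw [h3 e he] at h1
      omega
    obtain ⟨x, hx⟩ := hx_ex
    rw [Finset.mem_sdiff] at hx
    obtain ⟨hxe, hxyz⟩ := hx
    have hxy : x ≠ y := fun h => hxyz (by rw [h]; simp)
    have hxz : x ≠ z := fun h => hxyz (by rw [h]; simp)
    have he_eq : e = {x, y, z} := by
      apply (Finset.eq_of_subset_of_card_le ?_ ?_).symm
      · intro a ha
        simp only [Finset.mem_insert, Finset.mem_singleton] at ha
        rcases ha with rfl | rfl | rfl <;> assumption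
      · rw [h3 e he]
        have hcxyz : ({x, y, z} : Finset V).card = 3 := by
          rw [Finset.card_insert_of_notMem (by simp [hxy, hxz]),
            Finset.card_insert_of_notMem (by simp [hyz]), Finset.card_singleton]
        omega
    set D := E.filter (fun f => x ∈ f) with hDdef
    set d := D.card with hddef
    have heD : e ∈ D := Finset.mem_filter.2 ⟨he, hxe⟩
    have hd1 : 1 ≤ d := Finset.card_pos.2 ⟨e, heD⟩
    have hDsub : D ⊆ E := Finset.filter_subset _ _
    have hdn : d ≤ n := by rw [hddef, ← hcard]; exact Finset.card_le_card hDsub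
    set E'' := E \ D with hE''def
    have hE''card : E''.card = n - d := by
      rw [hE''def, Finset.card_sdiff_of_subset hDsub, hcard]
    have hE''lt : E''.card < n := by omega
    have hE''sub : E'' ⊆ E := Finset.sdiff_subset
    -- count vertices of D
    have hDbu : (D.biUnion id).card = 2 * d + 1 := by
      have h1 : D.biUnion id = insert x (D.biUnion (fun f => f.erase x)) := by
        ext a
        simp only [Finset.mem_biUnion, Finset.mem_insert, Finset.mem_erase, id]
        constructor
        · rintro ⟨f, hf, haf⟩
          by_cases h : a = x
          · exact Or.inl h
          · exact Or.inr ⟨f, hf, h, haf⟩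
        · rintro (rfl | ⟨f, hf, _, haf⟩)
          · exact ⟨e, heD, hxe⟩
          · exact ⟨f, hf, haf⟩
      have h2 : x ∉ D.biUnion (fun f => f.erase x) := by
        simp only [Finset.mem_biUnion, Finset.mem_erase]
        rintro ⟨f, _, h, _⟩
        exact h rfl
      have h3' : ∀ f ∈ D, ∀ g ∈ D, f ≠ g → Disjoint (f.erase x) (g.erase x) := by
        intro f hf g hg hfg
        rw [Finset.disjoint_left]
        intro a haf hag
        rw [Finset.mem_erase] at haf hag
        exact hfg (edges_eq_of_two hac (hDsub hf) (hDsub hg) haf.2 hag.2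
          (Finset.mem_filter.1 hf).2 (Finset.mem_filter.1 hg).2 haf.1)
      rw [h1, Finset.card_insert_of_notMem h2, Finset.card_biUnion h3']
      have h4 : ∀ f ∈ D, (f.erase x).card = 2 := by
        intro f hf
        rw [Finset.card_erase_of_mem (Finset.mem_filter.1 hf).2, h3 f (hDsub hf)]
      rw [Finset.sum_congr rfl h4]
      simp [hddef, mul_comm]
    set W := D.biUnion id \ e with hWdef
    have heDbu : e ⊆ D.biUnion id := fun a ha => Finset.mem_biUnion.2 ⟨e, heD, ha⟩
    have hWcard : W.card = 2 * d + 1 - 3 := by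
      rw [hWdef, Finset.card_sdiff_of_subset heDbu, hDbu, h3 e he]
    -- every edge of E'' reaches W within E''
    have hreachW : ∀ f ∈ E'', ∃ w ∈ W, ∃ v ∈ f, Relation.ReflTransGen (Adj E'') v w := by
      intro f hf
      rw [hE''def, Finset.mem_sdiff] at hf
      obtain ⟨hfE, hfD⟩ := hf
      have hxf : x ∉ f := fun h => hfD (Finset.mem_filter.2 ⟨hfE, h⟩)
      obtain ⟨v₀, hv₀⟩ := hedge_ne f hfE
      have h1 : Relation.ReflTransGen (Adj E) v₀ x :=
        hecon v₀ (Finset.mem_biUnion.2 ⟨f, hfE, hv₀⟩) x (Finset.mem_biUnion.2 ⟨e, he, hxe⟩)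
      obtain ⟨p, hp, hpath, hor⟩ := trunc h1 (Finset.mem_biUnion.2 ⟨e, heD, hxe⟩)
      rw [← hE''def] at hpath
      have hpnotin : p ∉ e := by
        intro hpe
        rw [he_eq] at hpe
        simp only [Finset.mem_insert, Finset.mem_singleton] at hpe
        have hpE'' : ∃ g, g ∈ E ∧ x ∉ g ∧ p ∈ g := by
          rcases hor with rfl | ⟨g, hg, hpg⟩
          · exact ⟨f, hfE, hxf, hv₀⟩
          · rw [← hE''def, hE''def, Finset.mem_sdiff] at hg
            exact ⟨g, hg.1, fun h => hg.2 (Finset.mem_filter.2 ⟨hg.1, h⟩), hpg⟩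
        obtain ⟨g, hgE, hxg, hpg⟩ := hpE''
        rcases hpe with rfl | rfl | rfl
        · exact hxg hpg
        · exact hxg (honly_y g hgE hpg ▸ hxe)
        · exact hxg (honly_z g hgE hpg ▸ hxe)
      exact ⟨p, Finset.mem_sdiff.2 ⟨hp, hpnotin⟩, v₀, hv₀, hpath⟩
    -- apply the W-version of the IH to E''
    obtain ⟨S'', hcov'', hb''⟩ := (IH E''.card hE''lt E'' rfl
      (fun hc => hac (hasCycle_mono hE''sub hc))
      (fun g hg => h3 g (hE''sub hg))).2 W hreachW
    refine ⟨insert x S'', ?_, ?_⟩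
    · intro f hf
      by_cases hxf : x ∈ f
      · exact ⟨x, Finset.mem_insert_self x S'', hxf⟩
      · have hfE'' : f ∈ E'' := Finset.mem_sdiff.2
          ⟨hf, fun h => hxf (Finset.mem_filter.1 h).2⟩
        obtain ⟨a, ha, haf⟩ := hcov'' f hfE''
        exact ⟨a, Finset.mem_insert_of_mem ha, haf⟩
    · have h1 : (insert x S'').card ≤ S''.card + 1 := Finset.card_insert_le x S''
      rw [hE''card, hWcard] at hb''
      rw [hcard]
      omega
  refine ⟨partA, ?_⟩
  -- ===== Part B : the W-version =====
  intro W hWhyp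
  by_cases hEe : E = ∅
  · subst hEe
    exact ⟨∅, fun f hf => absurd hf (Finset.notMem_empty f), by simp⟩
  have hne : E.Nonempty := Finset.nonempty_iff_ne_empty.2 hEe
  obtain ⟨f₀, hf₀⟩ := hne
  obtain ⟨w₀, hw₀W, x₀, hx₀, hreach₀⟩ := hWhyp f₀ hf₀
  set C := E.filter (fun g => ∃ v ∈ g, Relation.ReflTransGen (Adj E) v w₀) with hCdef
  have hCsub : C ⊆ E := Finset.filter_subset _ _
  have hf₀C : f₀ ∈ C := Finset.mem_filter.2 ⟨hf₀, x₀, hx₀, hreach₀⟩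
  have hCne : C.Nonempty := ⟨f₀, hf₀C⟩
  have hCto : ∀ a ∈ C.biUnion id, Relation.ReflTransGen (Adj C) a w₀ := by
    intro a ha
    obtain ⟨g, hg, hag⟩ := Finset.mem_biUnion.1 ha
    obtain ⟨hgE, v, hvg, hvw⟩ := Finset.mem_filter.1 hg
    have h1 : Relation.ReflTransGen (Adj E) a w₀ := (rtg_of_edge hgE hag hvg).trans hvw
    exact reach_in_comp h1 (fun g' hg' hx' => Finset.mem_filter.2 ⟨hg', hx'⟩)
  have hCecon : ECon C := fun a ha b hb => (hCto a ha).trans (rtg_symm (hCto b hb))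
  have hSC : ∃ S, IsVertexCover C S ∧ 3 * S.card ≤ 2 * C.card + 1 := by
    by_cases hCE : C = E
    · rw [hCE]
      exact (partA ⟨f₀, hf₀⟩ (hCE ▸ hCecon)).2
    · have hlt : C.card < n := by
        rw [← hcard]
        exact Finset.card_lt_card (lt_of_le_of_ne hCsub hCE)
      exact ((IH C.card hlt C rfl (fun hc => hac (hasCycle_mono hCsub hc))
        (fun g hg => h3 g (hCsub hg))).1 hCne hCecon).2
  obtain ⟨SC, hcovC, hbC⟩ := hSC
  set E₂ := E \ C with hE₂def
  have hE₂sub : E₂ ⊆ E := Finset.sdiff_subset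
  have hCcard1 : 1 ≤ C.card := Finset.card_pos.2 hCne
  have hE₂card : E₂.card = n - C.card := by rw [hE₂def, Finset.card_sdiff_of_subset hCsub, hcard]
  have hnpos2 : 1 ≤ n := by rw [← hcard]; exact Finset.card_pos.2 ⟨f₀, hf₀⟩
  have hCle : C.card ≤ n := by rw [← hcard]; exact Finset.card_le_card hCsub
  have hE₂lt : E₂.card < n := by omega
  have hhyp₂ : ∀ f ∈ E₂, ∃ w ∈ W.erase w₀, ∃ v ∈ f,
      Relation.ReflTransGen (Adj E₂) v w := by
    intro f hf
    rw [hE₂def, Finset.mem_sdiff] at hf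
    obtain ⟨hfE, hfC⟩ := hf
    obtain ⟨w, hwW, v, hvf, hre⟩ := hWhyp f hfE
    have hnv : ¬ Relation.ReflTransGen (Adj E) v w₀ := by
      intro h
      exact hfC (Finset.mem_filter.2 ⟨hfE, v, hvf, h⟩)
    have hww₀ : w ≠ w₀ := fun h => hnv (h ▸ hre)
    have hC' : ∀ g ∈ C, ∀ a ∈ g, Relation.ReflTransGen (Adj E) a w₀ := by
      intro g hg a hag
      obtain ⟨hgE, v', hv'g, hv'w⟩ := Finset.mem_filter.1 hg
      exact (rtg_of_edge hgE hag hv'g).trans hv'w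
    exact ⟨w, Finset.mem_erase.2 ⟨hww₀, hwW⟩, v, hvf, reach_avoid hre hC' hnv⟩
  obtain ⟨S₂, hcov₂, hb₂⟩ := (IH E₂.card hE₂lt E₂ rfl
    (fun hc => hac (hasCycle_mono hE₂sub hc))
    (fun g hg => h3 g (hE₂sub hg))).2 (W.erase w₀) hhyp₂
  refine ⟨SC ∪ S₂, ?_, ?_⟩
  · intro f hf
    by_cases hfC : f ∈ C
    · obtain ⟨a, ha, haf⟩ := hcovC f hfC
      exact ⟨a, Finset.mem_union_left _ ha, haf⟩
    · obtain ⟨a, ha, haf⟩ := hcov₂ f (Finset.mem_sdiff.2 ⟨hf, hfC⟩)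
      exact ⟨a, Finset.mem_union_right _ ha, haf⟩
  · have h1 : (SC ∪ S₂).card ≤ SC.card + S₂.card := Finset.card_union_le SC S₂
    have h2 : (W.erase w₀).card = W.card - 1 := Finset.card_erase_of_mem hw₀W
    have h3' : 1 ≤ W.card := Finset.card_pos.2 ⟨w₀, hw₀W⟩
    have h4 : C.card ≤ n := by rw [← hcard]; exact Finset.card_le_card hCsub
    rw [hE₂card, h2] at hb₂
    rw [hcard]
    omega

/-- A connected 3-uniform hypergraph with m edges containing
no cycle (a hypertree) satisfies τ(H) ≤ (2m+1)/3, i.e. 3·τ(H) ≤ 2m + 1. -/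
theorem stmt10 (E : Finset (Finset V)) (h3 : Uniform3 E) (hconn : HConnected E)
    (hacyclic : ¬ HasCycle E) :
    3 * coverNum E ≤ 2 * E.card + 1 := by
  classical
  have h0 : ∃ S, IsVertexCover E S ∧ 3 * S.card ≤ 2 * E.card + 1 := by
    by_cases hE : E = ∅
    · subst hE
      exact ⟨∅, fun f hf => absurd hf (Finset.notMem_empty f), by simp⟩
    · have hne : E.Nonempty := Finset.nonempty_iff_ne_empty.2 hE
      have hecon : ECon E := fun u _ v _ => hconn u v
      exact ((mega E.card E rfl hacyclic h3).1 hne hecon).2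
  obtain ⟨S, hcov, hb⟩ := h0
  have h1 : coverNum E ≤ S.card := Nat.sInf_le ⟨S, hcov, rfl⟩
  omega
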